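/- arXiv:2604.16961 — 2 statements merged into one kernel-verified Lean document; each statement's English description precedes it below -/
import Mathlib

section
/- Define g(x) := (x+1)ln(x+1) − x ln x for x > 0. Then for all M > 0, N > 0 and Δ ≥ 0, the quantity F(N, M, Δ) := −g(N) + ln(M+1) + ln((M+1)/M)·(N + Δ) is nonnegative, and F(N, M, Δ) = 0 if and only if N = M and Δ = 0. -/
/-- `g(x) = (x+1)ln(x+1) − x ln x`. -/
noncomputable def gFun (x : ℝ) : ℝ := (x + 1) * Real.log (x + 1) - x * Real.log x

/-- Strict two-point concavity of `log`: `w·log x < log (w·x + (1−w))` for `x ≠ 1`. -/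
lemma log_concave_core {x : ℝ} (hx : 0 < x) (hx1 : x ≠ 1) {w : ℝ}
    (hw0 : 0 < w) (hw1 : w < 1) :
    w * Real.log x < Real.log (w * x + (1 - w)) := by
  set D := w * x + (1 - w) with hD
  have hw1' : 0 < 1 - w := by linarith
  have hDpos : 0 < D := by positivity
  have hD1 : D ≠ 1 := by
    intro h
    apply hx1
    have : w * (x - 1) = 0 := by rw [hD] at h; linarith
    rcases mul_eq_zero.mp this with h' | h'
    · exact absurd h' hw0.ne'
    · linarith
  have h1 : Real.log x - Real.log D ≤ x / D - 1 := by
    rw [← Real.log_div hx.ne' hDpos.ne']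
    exact Real.log_le_sub_one_of_pos (by positivity)
  have h2 : -Real.log D < 1 / D - 1 := by
    have h1D : (1:ℝ) / D ≠ 1 := by
      intro h
      apply hD1
      field_simp at h
      linarith
    have := Real.log_lt_sub_one_of_pos (x := 1 / D) (by positivity) h1D
    rwa [Real.log_div one_ne_zero hDpos.ne', Real.log_one, zero_sub] at this
  have hsum : w * (x / D) + (1 - w) * (1 / D) = 1 := by
    field_simp
    exact hD.symm
  nlinarith [mul_le_mul_of_nonneg_left h1 hw0.le,
    mul_lt_mul_of_pos_left h2 hw1']

lemma key_strict {M N : ℝ} (hM : 0 < M) (hN : 0 < N) (hne : N ≠ M) :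
    N * Real.log (M / N) < (N + 1) * Real.log ((M + 1) / (N + 1)) := by
  have hN1 : (0:ℝ) < N + 1 := by linarith
  have hx : (0:ℝ) < M / N := by positivity
  have hx1 : M / N ≠ 1 := by
    intro h
    field_simp at h
    exact hne h.symm
  have hw0 : (0:ℝ) < N / (N + 1) := by positivity
  have hw1 : N / (N + 1) < 1 := by
    rw [div_lt_one hN1]; linarith
  have h := log_concave_core hx hx1 hw0 hw1
  have harg : N / (N + 1) * (M / N) + (1 - N / (N + 1)) = (M + 1) / (N + 1) := by
    field_simp
    ring
  rw [harg] at h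
  have := mul_lt_mul_of_pos_left h hN1
  calc N * Real.log (M / N) = (N + 1) * (N / (N + 1) * Real.log (M / N)) := by
        field_simp
    _ < (N + 1) * Real.log ((M + 1) / (N + 1)) := this

/-- The quantum relative entropy between displaced thermal states,
`F(N, M, Δ) = −g(N) + ln(M+1) + ln((M+1)/M)(N + Δ)`, is nonnegative for
`N, M > 0`, `Δ ≥ 0`, and vanishes if and only if `N = M` and `Δ = 0`. -/
theorem thermal_relative_entropy_nonneg (M N Δ : ℝ)
    (hM : 0 < M) (hN : 0 < N) (hΔ : 0 ≤ Δ) :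
    0 ≤ -gFun N + Real.log (M + 1) + Real.log ((M + 1) / M) * (N + Δ) ∧
    (-gFun N + Real.log (M + 1) + Real.log ((M + 1) / M) * (N + Δ) = 0 ↔
      N = M ∧ Δ = 0) := by
  have hM1 : (0:ℝ) < M + 1 := by linarith
  have hN1 : (0:ℝ) < N + 1 := by linarith
  have hlogpos : 0 < Real.log ((M + 1) / M) :=
    Real.log_pos (by rw [lt_div_iff₀ hM]; linarith)
  have hexp : -gFun N + Real.log (M + 1) + Real.log ((M + 1) / M) * (N + Δ)
      = ((N + 1) * Real.log ((M + 1) / (N + 1)) - N * Real.log (M / N))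
        + Real.log ((M + 1) / M) * Δ := by
    unfold gFun
    rw [Real.log_div hM1.ne' hM.ne', Real.log_div hM1.ne' hN1.ne',
      Real.log_div hM.ne' hN.ne']
    ring
  rcases eq_or_ne N M with rfl | hne
  · have hF0 : (N + 1) * Real.log ((N + 1) / (N + 1)) - N * Real.log (N / N) = 0 := by
      rw [div_self hN1.ne', div_self hN.ne', Real.log_one]; ring
    rw [hexp, hF0, zero_add]
    constructor
    · positivity
    · constructor
      · intro h
        refine ⟨rfl, ?_⟩
        rcases mul_eq_zero.mp h with h' | h'
        · exact absurd h' hlogpos.ne'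
        · exact h'
      · rintro ⟨-, rfl⟩; ring
  · have hF0 : 0 < (N + 1) * Real.log ((M + 1) / (N + 1)) - N * Real.log (M / N) := by
      linarith [key_strict hM hN hne]
    have hFpos : 0 < -gFun N + Real.log (M + 1) + Real.log ((M + 1) / M) * (N + Δ) := by
      rw [hexp]
      have : 0 ≤ Real.log ((M + 1) / M) * Δ := by positivity
      linarith
    exact ⟨hFpos.le, by
      constructor
      · intro h; exact absurd h hFpos.ne'
      · rintro ⟨rfl, -⟩; exact absurd rfl hne⟩
end

section
/- Let M ≥ 0, N > 0 and Δ ≥ 0, and for s ≤ 0 define f(s) := s·M + ln(N + 1 − N·e^{s}) + Δ·(1 − e^{s})/(N + 1 − N·e^{s}) (note N + 1 − N e^{s} ≥ 1 > 0 for s ≤ 0, so f is well defined). Then: (i) f(0) = 0, hence D_P := sup_{s ≤ 0} f(s) ≥ 0; (ii) f is differentiable at 0 with f′(0) = M − N − Δ; and (iii) if M < N + Δ then D_P > 0. -/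
/-- Properties of the photon-counting threshold exponent
`D_P = sup_{s ≤ 0} f(s)` with
`f(s) = sM + ln(N+1 − N eˢ) + Δ(1 − eˢ)/(N+1 − N eˢ)`:
(i) `f(0) = 0`, hence `D_P ≥ 0`; (ii) `f` is differentiable at `0` with
`f′(0) = M − N − Δ`; (iii) if `M < N + Δ` then `D_P > 0`. -/
theorem photon_counting_exponent (M N Δ : ℝ)
    (hM : 0 ≤ M) (hN : 0 < N) (hΔ : 0 ≤ Δ) :
    let f : ℝ → ℝ := fun s =>
      s * M + Real.log (N + 1 - N * Real.exp s) +
        Δ * (1 - Real.exp s) / (N + 1 - N * Real.exp s)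
    let DP : ℝ := sSup (f '' Set.Iic 0)
    f 0 = 0 ∧ 0 ≤ DP ∧ HasDerivAt f (M - N - Δ) 0 ∧ (M < N + Δ → 0 < DP) := by
  intro f DP
  have hf0 : f 0 = 0 := by simp [f]
  -- denominator bounds
  have hden : ∀ s : ℝ, s ≤ 0 → 1 ≤ N + 1 - N * Real.exp s := by
    intro s hs
    have he : Real.exp s ≤ 1 := Real.exp_le_one_iff.mpr hs
    nlinarith [hN.le]
  have hbdd : BddAbove (f '' Set.Iic 0) := by
    refine ⟨Real.log (N + 1) + Δ, ?_⟩
    rintro _ ⟨s, hs, rfl⟩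
    have hs : s ≤ 0 := hs
    have hd := hden s hs
    have he : Real.exp s ≤ 1 := Real.exp_le_one_iff.mpr hs
    have hepos : 0 < Real.exp s := Real.exp_pos s
    have h1 : s * M ≤ 0 := mul_nonpos_of_nonpos_of_nonneg hs hM
    have h2 : Real.log (N + 1 - N * Real.exp s) ≤ Real.log (N + 1) := by
      apply Real.log_le_log (by linarith)
      nlinarith
    have h3 : Δ * (1 - Real.exp s) / (N + 1 - N * Real.exp s) ≤ Δ := by
      rw [div_le_iff₀ (by linarith)]
      nlinarith
    simp only [f]
    linarith
  have hmem0 : f 0 ∈ f '' Set.Iic 0 := ⟨0, Set.mem_Iic.mpr le_rfl, rfl⟩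
  have hDP0 : 0 ≤ DP := by
    have := le_csSup hbdd hmem0
    rw [hf0] at this; exact this
  -- derivative
  have hg : HasDerivAt (fun s : ℝ => N + 1 - N * Real.exp s) (-N) 0 := by
    have := ((Real.hasDerivAt_exp 0).const_mul N).const_sub (N + 1)
    simpa using this
  have hg0 : (N + 1 - N * Real.exp 0) ≠ 0 := by simp
  have hlog : HasDerivAt (fun s : ℝ => Real.log (N + 1 - N * Real.exp s)) (-N) 0 := by
    have := hg.log hg0
    simpa using this
  have hnum : HasDerivAt (fun s : ℝ => Δ * (1 - Real.exp s)) (-Δ) 0 := by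
    have := ((Real.hasDerivAt_exp 0).const_sub 1).const_mul Δ
    simpa using this
  have hdiv : HasDerivAt (fun s : ℝ => Δ * (1 - Real.exp s) / (N + 1 - N * Real.exp s)) (-Δ) 0 := by
    have := hnum.div hg hg0
    simpa [Pi.div_def] using this
  have hid : HasDerivAt (fun s : ℝ => s * M) M 0 := by
    simpa using (hasDerivAt_id (0 : ℝ)).mul_const M
  have hf' : HasDerivAt f (M - N - Δ) 0 := by
    have := (hid.add hlog).add hdiv
    simp only [Pi.add_def] at this
    exact this.congr_deriv (by ring)
  refine ⟨hf0, hDP0, hf', ?_⟩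
  intro hlt
  -- derivative negative, so f s > 0 for some s < 0
  have hc : M - N - Δ < 0 := by linarith
  have hslope := hasDerivAt_iff_tendsto_slope.mp hf'
  have hev : ∀ᶠ s in nhdsWithin (0:ℝ) {(0:ℝ)}ᶜ, slope f 0 s < 0 :=
    hslope.eventually_lt_const hc
  have hev' : ∀ᶠ s in nhdsWithin (0:ℝ) (Set.Iio 0), slope f 0 s < 0 :=
    hev.filter_mono (nhdsWithin_mono 0 (fun x hx => by
      simp only [Set.mem_compl_iff, Set.mem_singleton_iff]
      exact ne_of_lt hx))
  obtain ⟨s, hs, hsneg⟩ := (hev'.and self_mem_nhdsWithin).exists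
  have hsneg : s < 0 := hsneg
  have hfs : 0 < f s := by
    have : slope f 0 s = f s / s := by
      simp [slope_def_field, hf0]
    rw [this] at hs
    rcases div_neg_iff.mp hs with ⟨h1, h2⟩ | ⟨h1, h2⟩
    · linarith
    · linarith
  calc 0 < f s := hfs
    _ ≤ DP := le_csSup hbdd ⟨s, Set.mem_Iic.mpr hsneg.le, rfl⟩
end
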